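/- For all positive integers a and all integers b with 0 ≤ b ≤ a, the integer a / gcd(a, b) divides the binomial coefficient binom(a, b). -/

import Mathlib

theorem stmt_1 (a b : ℕ) (ha : 0 < a) (hb : b ≤ a) :
    a / Nat.gcd a b ∣ a.choose b := by
  rcases Nat.eq_zero_or_pos b with rfl | hbpos
  · simp [Nat.div_self ha]
  have h1 : a ∣ a.choose b * b := by
    obtain ⟨a', rfl⟩ := Nat.exists_eq_add_of_lt ha
    obtain ⟨b', rfl⟩ := Nat.exists_eq_add_of_lt hbpos
    simp only [zero_add]
    rw [← Nat.add_one_mul_choose_eq]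
    exact Dvd.intro _ rfl
  have h2 : a ∣ Nat.gcd a b * a.choose b := by
    have := Nat.dvd_gcd (Dvd.intro (a.choose b) rfl) h1
    rw [mul_comm (a.choose b) b, Nat.gcd_mul_right] at this
    exact this
  have hg : 0 < Nat.gcd a b := Nat.gcd_pos_of_pos_left _ ha
  exact (Nat.div_dvd_iff_dvd_mul (Nat.gcd_dvd_left a b) hg).mpr h2
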